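/- Fix t > 0, ε > 0, β, ρ ∈ ℝ, let δ = -|β| - |ρ|/t + √((|β| + |ρ|/t)² + 2ε/t), let γ₀ ≥ 0, let ν be a Borel measure on ℝ concentrated on (0,∞) with ∫ min(x,1) ν(dx) < ∞ and ∫_{x>1} e^{rx} ν(dx) < ∞ for all r < ε, and let π be a Borel probability measure on ℝ concentrated on (-∞,0). Then for every u in the strip S = {u ∈ ℂ : |Re u| < δ}, the iterated integral ∫_{(-∞,0)} ∫₀ᵗ |θ_L(u·f_u(A,s))| ds π(dA) is finite, and the map u ↦ ∫_{(-∞,0)} |∫₀ᵗ θ_L(u·f_u(A,s)) ds| π(dA) is locally bounded on S (it is bounded on every compact subset of S). -/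

import Mathlib

open MeasureTheory

/-- `u·f_u(A,s) = ((e^{A(t-s)} - 1)/A)(uβ + u²/2) + ρu` for complex `u`. -/
noncomputable def ufc (t β ρ : ℝ) (u : ℂ) (A s : ℝ) : ℂ :=
  (((Real.exp (A * (t - s)) - 1) / A : ℝ) : ℂ) * (u * (β : ℂ) + u ^ 2 / 2) + (ρ : ℂ) * u

/-- `θ_L(z) = γ₀ z + ∫_{(0,∞)} (e^{zx} - 1) ν(dx)`. -/
noncomputable def thetaL (γ₀ : ℝ) (ν : Measure ℝ) (z : ℂ) : ℂ :=
  (γ₀ : ℂ) * z + ∫ x in Set.Ioi (0 : ℝ), (Complex.exp (z * (x : ℂ)) - 1) ∂ν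

lemma norm_exp_sub_one_le' (w : ℂ) : ‖Complex.exp w - 1‖ ≤ ‖w‖ * Real.exp ‖w‖ := by
  have hconv : Convex ℝ (Metric.closedBall (0:ℂ) ‖w‖) := convex_closedBall _ _
  have hder : ∀ z ∈ Metric.closedBall (0:ℂ) ‖w‖,
      HasDerivWithinAt Complex.exp (Complex.exp z) (Metric.closedBall (0:ℂ) ‖w‖) z :=
    fun z _ => (Complex.hasDerivAt_exp z).hasDerivWithinAt
  have hbound : ∀ z ∈ Metric.closedBall (0:ℂ) ‖w‖, ‖Complex.exp z‖ ≤ Real.exp ‖w‖ := by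
    intro z hz
    rw [Complex.norm_exp]
    have h2 : ‖z‖ ≤ ‖w‖ := by
      simpa [Metric.mem_closedBall, Complex.dist_eq] using hz
    exact Real.exp_le_exp.2 (((le_abs_self _).trans (Complex.abs_re_le_norm z)).trans h2)
  have hmw : w ∈ Metric.closedBall (0:ℂ) ‖w‖ := by
    simp [Metric.mem_closedBall, Complex.dist_eq]
  have h := hconv.norm_image_sub_le_of_norm_hasDerivWithin_le hder hbound
      (Metric.mem_closedBall_self (norm_nonneg w)) hmw
  simpa [Complex.exp_zero, mul_comm] using h

lemma ufc_bounds (t β ρ : ℝ) (ht : 0 < t) (u : ℂ) (A s : ℝ) (hA : A < 0)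
    (hs : s ∈ Set.Ioc 0 t) :
    ‖ufc t β ρ u A s‖
      ≤ t * (‖u‖ * |β| + (‖u‖) ^ 2 / 2) + |ρ| * ‖u‖ ∧
    (ufc t β ρ u A s).re ≤ t * (|β| * |u.re| + u.re ^ 2 / 2) + |ρ| * |u.re| := by
  set c : ℝ := (Real.exp (A * (t - s)) - 1) / A with hc
  have hts : 0 ≤ t - s := by linarith [hs.2]
  have hexple : Real.exp (A * (t - s)) ≤ 1 := by
    apply Real.exp_le_one_iff.2
    exact mul_nonpos_of_nonpos_of_nonneg hA.le hts
  have hc0 : 0 ≤ c := div_nonneg_iff.2 (Or.inr ⟨by linarith, hA.le⟩)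
  have hct : c ≤ t := by
    have h1 : A * (t - s) + 1 ≤ Real.exp (A * (t - s)) := Real.add_one_le_exp _
    have h2 : c ≤ t - s := by
      rw [hc, div_le_iff_of_neg hA]
      nlinarith
    linarith [hs.1]
  constructor
  · have habs : ‖u * (β:ℂ) + u ^ 2 / 2‖
        ≤ ‖u‖ * |β| + (‖u‖) ^ 2 / 2 := by
      refine (norm_add_le _ _).trans ?_
      simp [norm_mul, norm_div, norm_pow, Complex.norm_real]
    calc ‖ufc t β ρ u A s‖
        ≤ ‖(c:ℂ) * (u * (β:ℂ) + u ^ 2 / 2)‖ + ‖(ρ:ℂ) * u‖ :=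
          norm_add_le _ _
      _ = |c| * ‖u * (β:ℂ) + u ^ 2 / 2‖ + |ρ| * ‖u‖ := by
          simp [norm_mul, Complex.norm_real]
      _ ≤ t * (‖u‖ * |β| + (‖u‖) ^ 2 / 2) + |ρ| * ‖u‖ := by
          have h3 : |c| = c := abs_of_nonneg hc0
          have h4 : (0:ℝ) ≤ ‖u‖ * |β| + (‖u‖) ^ 2 / 2 := by positivity
          rw [h3]
          have := mul_le_mul hct habs (norm_nonneg _) ht.le
          linarith
  · have hw : (u * (β:ℂ) + u ^ 2 / 2).re = β * u.re + (u.re ^ 2 - u.im ^ 2) / 2 := by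
      simp [pow_two, Complex.add_re, Complex.div_re, Complex.mul_re, Complex.normSq,
        Complex.ofReal_re, Complex.ofReal_im]
      ring
    have hre : (ufc t β ρ u A s).re = c * (u * (β:ℂ) + u ^ 2 / 2).re + ρ * u.re := by
      simp only [ufc, Complex.add_re, Complex.re_ofReal_mul, hc]
    rw [hre, hw]
    have h5 : β * u.re ≤ |β| * |u.re| := (le_abs_self _).trans (abs_mul _ _).le
    have h6 : ρ * u.re ≤ |ρ| * |u.re| := (le_abs_self _).trans (abs_mul _ _).le
    have hX : β * u.re + (u.re ^ 2 - u.im ^ 2) / 2 ≤ |β| * |u.re| + u.re ^ 2 / 2 := by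
      nlinarith [sq_nonneg u.im]
    have hX0 : (0:ℝ) ≤ |β| * |u.re| + u.re ^ 2 / 2 := by positivity
    have h8 := mul_le_mul_of_nonneg_left hX hc0
    have h9 := mul_le_mul_of_nonneg_right hct hX0
    linarith

lemma strip_lt (t ε β ρ : ℝ) (ht : 0 < t) (hε : 0 < ε) (a : ℝ) (ha0 : 0 ≤ a)
    (ha : a < -|β| - |ρ| / t + Real.sqrt ((|β| + |ρ| / t) ^ 2 + 2 * ε / t)) :
    t * (|β| * a + a ^ 2 / 2) + |ρ| * a < ε := by
  set B := |β| + |ρ| / t with hB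
  have hB0 : 0 ≤ B := by positivity
  have hS : Real.sqrt (B ^ 2 + 2 * ε / t) ^ 2 = B ^ 2 + 2 * ε / t :=
    Real.sq_sqrt (by positivity)
  set S := Real.sqrt (B ^ 2 + 2 * ε / t) with hSdef
  have h1 : a + B < S := by
    have : -|β| - |ρ| / t = -B := by rw [hB]; ring
    linarith [ha.trans_le (le_of_eq (by rw [this]))]
  have h2 : (a + B) ^ 2 < S ^ 2 := by nlinarith [Real.sqrt_nonneg (B ^ 2 + 2 * ε / t)]
  have htB : t * B = t * |β| + |ρ| := by rw [hB, mul_add]; congr 1; field_simp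
  rw [hS] at h2
  have h3 : t * ((a + B) ^ 2) < t * B ^ 2 + 2 * ε := by
    have h4 := mul_lt_mul_of_pos_left h2 ht
    have h5 : t * (2 * ε / t) = 2 * ε := by field_simp
    rw [mul_add, h5] at h4
    linarith
  nlinarith

lemma thetaL_bound (γ₀ : ℝ) (hγ₀ : 0 ≤ γ₀) (ν : Measure ℝ) (hν : ν (Set.Ioi (0:ℝ))ᶜ = 0)
    (hmin : Integrable (fun x : ℝ => min x 1) ν)
    (r M : ℝ) (hr : 0 ≤ r) (hM : 0 ≤ M)
    (hB2i : IntegrableOn (fun x : ℝ => Real.exp (r * x) + 1) (Set.Ioi 1) ν)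
    (z : ℂ) (hz1 : ‖z‖ ≤ M) (hz2 : z.re ≤ r) :
    ‖thetaL γ₀ ν z‖ ≤ γ₀ * M + (M * Real.exp M * (∫ x, min x 1 ∂ν)
      + ∫ x in Set.Ioi (1:ℝ), (Real.exp (r * x) + 1) ∂ν) := by
  have haepos : ∀ᵐ x ∂ν, x ∈ Set.Ioi (0:ℝ) := by
    rw [MeasureTheory.ae_iff]
    simpa [Set.compl_def] using hν
  have haemin : 0 ≤ᵐ[ν] fun x : ℝ => min x 1 :=
    haepos.mono fun x hx => le_min (le_of_lt hx) zero_le_one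
  have hB1 : 0 ≤ ∫ x, min x 1 ∂ν := integral_nonneg_of_ae haemin
  have hB2 : 0 ≤ ∫ x in Set.Ioi (1:ℝ), (Real.exp (r * x) + 1) ∂ν :=
    integral_nonneg fun x => by positivity
  have hpt1 : ∀ x ∈ Set.Ioc (0:ℝ) 1,
      ‖Complex.exp (z * (x:ℂ)) - 1‖ ≤ M * Real.exp M * min x 1 := by
    intro x hx
    have h1 := norm_exp_sub_one_le' (z * (x:ℂ))
    have h2 : ‖z * (x:ℂ)‖ = ‖z‖ * x := by
      rw [norm_mul, Complex.norm_real, Real.norm_eq_abs, abs_of_pos hx.1]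
    rw [h2] at h1
    have h3 : ‖z‖ * x ≤ M := by
      calc ‖z‖ * x ≤ M * 1 :=
        mul_le_mul hz1 hx.2 hx.1.le hM
      _ = M := mul_one M
    have h4 : Real.exp (‖z‖ * x) ≤ Real.exp M := Real.exp_le_exp.2 h3
    have h5 : ‖z‖ * x ≤ M * x :=
      mul_le_mul_of_nonneg_right hz1 hx.1.le
    have hmin1 : min x 1 = x := min_eq_left hx.2
    rw [hmin1]
    calc ‖Complex.exp (z * (x:ℂ)) - 1‖ ≤ ‖z‖ * x * Real.exp (‖z‖ * x) := h1
      _ ≤ M * x * Real.exp M := by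
          exact mul_le_mul h5 h4 (Real.exp_pos _).le (mul_nonneg hM hx.1.le)
      _ = M * Real.exp M * x := by ring
  have hpt2 : ∀ x ∈ Set.Ioi (1:ℝ),
      ‖Complex.exp (z * (x:ℂ)) - 1‖ ≤ Real.exp (r * x) + 1 := by
    intro x hx
    have hx0 : (0:ℝ) < x := lt_trans one_pos hx
    calc ‖Complex.exp (z * (x:ℂ)) - 1‖ ≤ ‖Complex.exp (z * (x:ℂ))‖ + 1 := by
          simpa using norm_sub_le (Complex.exp (z * (x:ℂ))) 1
      _ ≤ Real.exp (r * x) + 1 := by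
          rw [Complex.norm_exp]
          have hre : (z * (x:ℂ)).re = z.re * x := by
            simp [Complex.mul_re]
          rw [hre]
          have : z.re * x ≤ r * x := mul_le_mul_of_nonneg_right hz2 hx0.le
          exact add_le_add_left (Real.exp_le_exp.2 this) 1
  rw [thetaL]
  refine (norm_add_le _ _).trans (add_le_add ?_ ?_)
  · rw [norm_mul, Complex.norm_real, Real.norm_eq_abs, abs_of_nonneg hγ₀]
    exact mul_le_mul_of_nonneg_left hz1 hγ₀
  by_cases hint : IntegrableOn (fun x : ℝ => Complex.exp (z * (x:ℂ)) - 1) (Set.Ioi 0) ν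
  · have hunion : Set.Ioc (0:ℝ) 1 ∪ Set.Ioi 1 = Set.Ioi 0 := Set.Ioc_union_Ioi_eq_Ioi zero_le_one
    have hn1 : IntegrableOn (fun x : ℝ => ‖Complex.exp (z * (x:ℂ)) - 1‖) (Set.Ioc 0 1) ν :=
      IntegrableOn.mono_set hint.norm (by rw [← hunion]; exact Set.subset_union_left)
    have hn2 : IntegrableOn (fun x : ℝ => ‖Complex.exp (z * (x:ℂ)) - 1‖) (Set.Ioi 1) ν :=
      IntegrableOn.mono_set hint.norm (by rw [← hunion]; exact Set.subset_union_right)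
    have hmaj1 : IntegrableOn (fun x : ℝ => M * Real.exp M * min x 1) (Set.Ioc 0 1) ν :=
      (hmin.integrableOn.const_mul _)
    calc ‖∫ x in Set.Ioi (0:ℝ), (Complex.exp (z * (x:ℂ)) - 1) ∂ν‖
        ≤ ∫ x in Set.Ioi (0:ℝ), ‖Complex.exp (z * (x:ℂ)) - 1‖ ∂ν :=
          norm_integral_le_integral_norm _
      _ = (∫ x in Set.Ioc (0:ℝ) 1, ‖Complex.exp (z * (x:ℂ)) - 1‖ ∂ν)
          + ∫ x in Set.Ioi (1:ℝ), ‖Complex.exp (z * (x:ℂ)) - 1‖ ∂ν := by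
          rw [← hunion, setIntegral_union (Set.Ioc_disjoint_Ioi le_rfl) measurableSet_Ioi hn1 hn2]
      _ ≤ (∫ x in Set.Ioc (0:ℝ) 1, M * Real.exp M * min x 1 ∂ν)
          + ∫ x in Set.Ioi (1:ℝ), (Real.exp (r * x) + 1) ∂ν :=
          add_le_add (setIntegral_mono_on hn1 hmaj1 measurableSet_Ioc hpt1)
            (setIntegral_mono_on hn2 hB2i measurableSet_Ioi hpt2)
      _ ≤ M * Real.exp M * (∫ x, min x 1 ∂ν)
          + ∫ x in Set.Ioi (1:ℝ), (Real.exp (r * x) + 1) ∂ν := by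
          have he : ∫ x in Set.Ioc (0:ℝ) 1, M * Real.exp M * min x 1 ∂ν
              = M * Real.exp M * ∫ x in Set.Ioc (0:ℝ) 1, min x 1 ∂ν := by
            rw [integral_const_mul]
          have hle : ∫ x in Set.Ioc (0:ℝ) 1, min x 1 ∂ν ≤ ∫ x, min x 1 ∂ν :=
            setIntegral_le_integral hmin haemin
          rw [he]
          have : (0:ℝ) ≤ M * Real.exp M := by positivity
          nlinarith
  · rw [integral_undef hint]
    simp only [norm_zero]
    positivity

theorem stmt_8 (t ε β ρ γ₀ : ℝ) (ht : 0 < t) (hε : 0 < ε) (hγ₀ : 0 ≤ γ₀)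
    (ν : Measure ℝ) (hν : ν (Set.Ioi (0 : ℝ))ᶜ = 0)
    (hmin : Integrable (fun x : ℝ => min x 1) ν)
    (hexp : ∀ r : ℝ, r < ε → IntegrableOn (fun x : ℝ => Real.exp (r * x)) {x | 1 < x} ν)
    (π : Measure ℝ) [IsProbabilityMeasure π] (hπ : π (Set.Iio (0 : ℝ))ᶜ = 0) :
    (∀ u : ℂ, |u.re| < -|β| - |ρ| / t + Real.sqrt ((|β| + |ρ| / t) ^ 2 + 2 * ε / t) →
      (∫⁻ A in Set.Iio (0 : ℝ),
          ∫⁻ s in Set.Ioc (0 : ℝ) t, ‖thetaL γ₀ ν (ufc t β ρ u A s)‖₊ ∂volume ∂π) < ⊤) ∧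
    ∀ K : Set ℂ,
      K ⊆ {u : ℂ | |u.re| < -|β| - |ρ| / t + Real.sqrt ((|β| + |ρ| / t) ^ 2 + 2 * ε / t)} →
      IsCompact K → ∃ C : ℝ, ∀ u ∈ K,
        (∫ A in Set.Iio (0 : ℝ),
            ‖∫ s in (0 : ℝ)..t, thetaL γ₀ ν (ufc t β ρ u A s)‖ ∂π) ≤ C := by
  have haepos : ∀ᵐ x ∂ν, x ∈ Set.Ioi (0:ℝ) := by
    rw [MeasureTheory.ae_iff]
    simpa [Set.compl_def] using hν
  have haemin : 0 ≤ᵐ[ν] fun x : ℝ => min x 1 :=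
    haepos.mono fun x hx => le_min (le_of_lt hx) zero_le_one
  have hB1 : 0 ≤ ∫ x, min x 1 ∂ν := integral_nonneg_of_ae haemin
  -- constant-1 integrability on Ioi 1
  have hone : IntegrableOn (fun _ : ℝ => (1:ℝ)) (Set.Ioi 1) ν := by
    refine (hmin.integrableOn.congr_fun (fun x hx => ?_) measurableSet_Ioi)
    exact min_eq_right (le_of_lt hx)
  -- the uniform bound
  have hbound : ∀ rr MM : ℝ, 0 ≤ rr → rr < ε → 0 ≤ MM → ∀ u : ℂ,
      t * (|β| * |u.re| + u.re ^ 2 / 2) + |ρ| * |u.re| ≤ rr →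
      t * (‖u‖ * |β| + (‖u‖) ^ 2 / 2) + |ρ| * ‖u‖ ≤ MM →
      ∀ A ∈ Set.Iio (0:ℝ), ∀ s ∈ Set.Ioc (0:ℝ) t,
        ‖thetaL γ₀ ν (ufc t β ρ u A s)‖ ≤ γ₀ * MM + (MM * Real.exp MM * (∫ x, min x 1 ∂ν)
          + ∫ x in Set.Ioi (1:ℝ), (Real.exp (rr * x) + 1) ∂ν) := by
    intro rr MM hrr0 hrrε hMM0 u hru hMu A hA s hs
    have hB2i : IntegrableOn (fun x : ℝ => Real.exp (rr * x) + 1) (Set.Ioi 1) ν :=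
      (hexp rr hrrε).add hone
    have hub := ufc_bounds t β ρ ht u A s hA hs
    exact thetaL_bound γ₀ hγ₀ ν hν hmin rr MM hrr0 hMM0 hB2i _
      (hub.1.trans hMu) (hub.2.trans hru)
  have hB2nn : ∀ rr : ℝ, 0 ≤ ∫ x in Set.Ioi (1:ℝ), (Real.exp (rr * x) + 1) ∂ν :=
    fun rr => integral_nonneg fun x => by positivity
  constructor
  · -- part 1
    intro u hu
    have hrrε : t * (|β| * |u.re| + u.re ^ 2 / 2) + |ρ| * |u.re| < ε := by
      have h := strip_lt t ε β ρ ht hε |u.re| (abs_nonneg _) hu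
      simpa [sq_abs] using h
    obtain ⟨C, hCb⟩ : ∃ C : ℝ, ∀ A ∈ Set.Iio (0:ℝ), ∀ s ∈ Set.Ioc (0:ℝ) t,
        ‖thetaL γ₀ ν (ufc t β ρ u A s)‖ ≤ C :=
      ⟨_, hbound _ _ (by positivity) hrrε (by positivity) u le_rfl le_rfl⟩
    calc (∫⁻ A in Set.Iio (0:ℝ),
            ∫⁻ s in Set.Ioc (0:ℝ) t, ‖thetaL γ₀ ν (ufc t β ρ u A s)‖₊ ∂volume ∂π)
        ≤ ∫⁻ _ in Set.Iio (0:ℝ), ENNReal.ofReal C * ENNReal.ofReal t ∂π := by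
          refine lintegral_mono_ae ((ae_restrict_iff' measurableSet_Iio).2
            (Filter.Eventually.of_forall fun A hA => ?_))
          calc (∫⁻ s in Set.Ioc (0:ℝ) t, ‖thetaL γ₀ ν (ufc t β ρ u A s)‖₊ ∂volume)
              ≤ ∫⁻ _ in Set.Ioc (0:ℝ) t, ENNReal.ofReal C ∂volume := by
                refine lintegral_mono_ae ((ae_restrict_iff' measurableSet_Ioc).2
                  (Filter.Eventually.of_forall fun s hs => ?_))
                rw [← enorm_eq_nnnorm, ← ofReal_norm]
                exact ENNReal.ofReal_le_ofReal (hCb A hA s hs)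
            _ = ENNReal.ofReal C * ENNReal.ofReal t := by
                rw [setLIntegral_const, Real.volume_Ioc, sub_zero]
      _ = ENNReal.ofReal C * ENNReal.ofReal t * π (Set.Iio 0) := setLIntegral_const _ _
      _ < ⊤ := by
          refine ENNReal.mul_lt_top (ENNReal.mul_lt_top ?_ ?_) (measure_lt_top π _) <;>
            exact ENNReal.ofReal_lt_top
  · -- part 2
    intro K hKsub hKcomp
    rcases K.eq_empty_or_nonempty with rfl | hne
    · exact ⟨0, by simp⟩
    obtain ⟨u₀, hu₀K, hu₀max⟩ := hKcomp.exists_isMaxOn hne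
      ((continuous_abs.comp Complex.continuous_re).continuousOn)
    obtain ⟨u₁, hu₁K, hu₁max⟩ := hKcomp.exists_isMaxOn hne
      continuous_norm.continuousOn
    set a := |u₀.re| with ha
    set rr := t * (|β| * a + a ^ 2 / 2) + |ρ| * a with hrr
    set MM := t * (‖u₁‖ * |β| + (‖u₁‖) ^ 2 / 2) + |ρ| * ‖u₁‖
      with hMM
    have ha0 : 0 ≤ a := abs_nonneg _
    have hrr0 : 0 ≤ rr := by rw [hrr]; positivity
    have hrrε : rr < ε := strip_lt t ε β ρ ht hε a ha0 (hKsub hu₀K)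
    have hMM0 : 0 ≤ MM := by rw [hMM]; positivity
    set C := γ₀ * MM + (MM * Real.exp MM * (∫ x, min x 1 ∂ν)
      + ∫ x in Set.Ioi (1:ℝ), (Real.exp (rr * x) + 1) ∂ν) with hC
    have hC0 : 0 ≤ C := by
      rw [hC]
      have h1 : (0:ℝ) ≤ MM * Real.exp MM * (∫ x, min x 1 ∂ν) :=
        mul_nonneg (by positivity) hB1
      have h2 := hB2nn rr
      have h3 : (0:ℝ) ≤ γ₀ * MM := mul_nonneg hγ₀ hMM0
      linarith
    refine ⟨C * t, fun u huK => ?_⟩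
    -- pointwise bound for this u
    have hru : t * (|β| * |u.re| + u.re ^ 2 / 2) + |ρ| * |u.re| ≤ rr := by
      have hx : |u.re| ≤ a := hu₀max huK
      have hx0 : 0 ≤ |u.re| := abs_nonneg _
      have h1 : |β| * |u.re| ≤ |β| * a := mul_le_mul_of_nonneg_left hx (abs_nonneg β)
      have h2 : u.re ^ 2 ≤ a ^ 2 := by
        rw [← sq_abs u.re]
        exact pow_le_pow_left₀ hx0 hx 2
      have h3 : |ρ| * |u.re| ≤ |ρ| * a := mul_le_mul_of_nonneg_left hx (abs_nonneg ρ)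
      rw [hrr]
      nlinarith
    have hMu : t * (‖u‖ * |β| + (‖u‖) ^ 2 / 2) + |ρ| * ‖u‖
        ≤ MM := by
      have hx : ‖u‖ ≤ ‖u₁‖ := hu₁max huK
      have hx0 : 0 ≤ ‖u‖ := norm_nonneg _
      have h1 : ‖u‖ * |β| ≤ ‖u₁‖ * |β| :=
        mul_le_mul_of_nonneg_right hx (abs_nonneg β)
      have h2 : (‖u‖) ^ 2 ≤ (‖u₁‖) ^ 2 := pow_le_pow_left₀ hx0 hx 2
      have h3 : |ρ| * ‖u‖ ≤ |ρ| * ‖u₁‖ :=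
        mul_le_mul_of_nonneg_left hx (abs_nonneg ρ)
      rw [hMM]
      nlinarith
    have hCb := hbound rr MM hrr0 hrrε hMM0 u hru hMu
    -- interval integral bound for each A < 0
    have hg : ∀ A ∈ Set.Iio (0:ℝ),
        ‖∫ s in (0:ℝ)..t, thetaL γ₀ ν (ufc t β ρ u A s)‖ ≤ C * t := by
      intro A hA
      have h := intervalIntegral.norm_integral_le_of_norm_le_const
        (C := C) (f := fun s => thetaL γ₀ ν (ufc t β ρ u A s)) (a := (0:ℝ)) (b := t) ?_
      · calc ‖∫ s in (0:ℝ)..t, thetaL γ₀ ν (ufc t β ρ u A s)‖ ≤ C * |t - 0| := h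
          _ = C * t := by rw [sub_zero, abs_of_pos ht]
      · intro s hs
        rw [Set.uIoc_of_le ht.le] at hs
        exact hCb A hA s hs
    by_cases hint : Integrable
        (fun A => ‖∫ s in (0:ℝ)..t, thetaL γ₀ ν (ufc t β ρ u A s)‖)
        (π.restrict (Set.Iio 0))
    · calc (∫ A in Set.Iio (0:ℝ),
            ‖∫ s in (0:ℝ)..t, thetaL γ₀ ν (ufc t β ρ u A s)‖ ∂π)
          ≤ ∫ _ in Set.Iio (0:ℝ), C * t ∂π :=
            integral_mono_ae hint (integrable_const _)
              ((ae_restrict_iff' measurableSet_Iio).2 (Filter.Eventually.of_forall hg))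
        _ = (π (Set.Iio 0)).toReal * (C * t) := by
            rw [integral_const, smul_eq_mul, Measure.real, Measure.restrict_apply_univ]
        _ ≤ 1 * (C * t) := by
            refine mul_le_mul_of_nonneg_right ?_ (by positivity)
            have h1 : π (Set.Iio 0) ≤ 1 := prob_le_one
            calc (π (Set.Iio 0)).toReal ≤ (1:ENNReal).toReal :=
              ENNReal.toReal_mono ENNReal.one_ne_top h1
            _ = 1 := ENNReal.toReal_one
        _ = C * t := one_mul _
    · rw [integral_undef hint]
      positivity
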